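/- If n is even and positive and 0 < u < 1, then (−1)^{⌈n/2⌉}(B_n(u) − B_n) > 0; if furthermore n is divisible by 4, then B_n(u) − B_n ≥ 0 for all real u. -/

import Mathlib

open Polynomial Real Set Nat

private lemma aeval_eq_bernoulliFun (n : ℕ) (u : ℝ) :
    (Polynomial.aeval u (Polynomial.bernoulli n) : ℝ) = bernoulliFun n u := by
  rw [bernoulliFun, Polynomial.aeval_def, Polynomial.eval_map]

private lemma bernoulliFun_add_one (n : ℕ) (u : ℝ) :
    bernoulliFun n (u + 1) = bernoulliFun n u + n * u ^ (n - 1) := by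
  have hq : (Polynomial.bernoulli n).comp (Polynomial.X + 1) =
      Polynomial.bernoulli n + Polynomial.C (n : ℚ) * Polynomial.X ^ (n - 1) := by
    apply Polynomial.funext
    intro x
    simp only [Polynomial.eval_comp, Polynomial.eval_add, Polynomial.eval_X,
      Polynomial.eval_one, Polynomial.eval_mul, Polynomial.eval_C, Polynomial.eval_pow]
    rw [add_comm x 1, Polynomial.bernoulli_eval_one_add]
  have := congrArg (Polynomial.aeval u) hq
  rw [Polynomial.aeval_comp] at this
  simp only [map_add, map_mul, map_pow, Polynomial.aeval_X, Polynomial.aeval_one,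
    Polynomial.aeval_C] at this
  rw [← aeval_eq_bernoulliFun, ← aeval_eq_bernoulliFun, this]
  norm_num

private lemma key_hasSum (k : ℕ) (hk : k ≠ 0) {x : ℝ} (hx : x ∈ Set.Icc (0:ℝ) 1) :
    HasSum (fun m : ℕ => 1 / (m : ℝ) ^ (2 * k) * (Real.cos (2 * π * m * x) - 1))
      ((-1 : ℝ) ^ (k + 1) * (2 * π) ^ (2 * k) / 2 / (2 * k)! *
        (bernoulliFun (2 * k) x - (bernoulli (2 * k) : ℝ))) := by
  have h1 := hasSum_one_div_nat_pow_mul_cos hk hx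
  have h0 := hasSum_one_div_nat_pow_mul_cos hk (Set.left_mem_Icc.mpr zero_le_one)
  simp only [mul_zero, Real.cos_zero, mul_one] at h0
  have := h1.sub h0
  rw [← bernoulliFun, ← bernoulliFun, bernoulliFun_eval_zero] at this
  rw [← mul_sub] at this
  convert this using 1
  ext m
  ring
  ext m
  ring

private lemma term_nonpos (k : ℕ) (x : ℝ) (m : ℕ) :
    1 / (m : ℝ) ^ (2 * k) * (Real.cos (2 * π * m * x) - 1) ≤ 0 :=
  mul_nonpos_of_nonneg_of_nonpos (by positivity)
    (by linarith [Real.cos_le_one (2 * π * m * x)])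

private lemma pi_fact_pos (k : ℕ) : 0 < (2 * π) ^ (2 * k) / 2 / ((2 * k)! : ℝ) := by
  have := Real.pi_pos
  positivity

private lemma factor_eq (k : ℕ) (y : ℝ) :
    (-1 : ℝ) ^ (k + 1) * (2 * π) ^ (2 * k) / 2 / (2 * k)! * y =
      ((2 * π) ^ (2 * k) / 2 / ((2 * k)! : ℝ)) * ((-1 : ℝ) ^ (k + 1) * y) := by
  ring

private lemma key_nonpos (k : ℕ) (hk : k ≠ 0) {x : ℝ} (hx : x ∈ Set.Icc (0:ℝ) 1) :
    (-1 : ℝ) ^ (k + 1) * (bernoulliFun (2 * k) x - (bernoulli (2 * k) : ℝ)) ≤ 0 := by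
  have h := hasSum_le (fun m => term_nonpos k x m) (key_hasSum k hk hx) hasSum_zero
  rw [factor_eq] at h
  exact le_of_not_gt fun hy => absurd (mul_pos (pi_fact_pos k) hy) (not_lt.mpr h)

private lemma key_neg (k : ℕ) (hk : k ≠ 0) {x : ℝ} (hx0 : 0 < x) (hx1 : x < 1) :
    (-1 : ℝ) ^ (k + 1) * (bernoulliFun (2 * k) x - (bernoulli (2 * k) : ℝ)) < 0 := by
  have hS := key_hasSum k hk (Set.mem_Icc.mpr ⟨hx0.le, hx1.le⟩)
  have hπ := Real.pi_pos
  have hcos : Real.cos (2 * π * (1:ℕ) * x) < 1 := by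
    refine lt_of_le_of_ne (Real.cos_le_one _) ?_
    intro h
    rw [Real.cos_eq_one_iff_of_lt_of_lt (by push_cast; nlinarith) (by push_cast; nlinarith)]
      at h
    push_cast at h
    nlinarith
  have h1 : 1 / ((1:ℕ) : ℝ) ^ (2 * k) * (Real.cos (2 * π * (1:ℕ) * x) - 1) < 0 := by
    push_cast at hcos ⊢
    rw [mul_one] at hcos
    norm_num
    linarith
  have hlt := Summable.tsum_lt_tsum (f := fun m : ℕ => 1 / (m : ℝ) ^ (2 * k) *
      (Real.cos (2 * π * m * x) - 1)) (g := fun _ : ℕ => (0:ℝ))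
    (fun m => term_nonpos k x m) h1 hS.summable summable_zero
  rw [hS.tsum_eq, tsum_zero, factor_eq] at hlt
  exact lt_of_not_ge fun hy =>
    absurd hlt (not_lt.mpr (mul_nonneg (pi_fact_pos k).le hy))

/-- For even positive `n` and `0 < u < 1`, `(-1)^{⌈n/2⌉} (B_n(u) - B_n) > 0`;
if moreover `4 ∣ n`, then `B_n(u) - B_n ≥ 0` for all real `u`. -/
theorem bernoulli_sub_pos (n : ℕ) (heven : Even n) (hn : 0 < n) :
    (∀ u : ℝ, 0 < u → u < 1 →
        0 < (-1 : ℝ) ^ (n / 2) *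
          (Polynomial.aeval u (Polynomial.bernoulli n) - (bernoulli n : ℝ))) ∧
    (4 ∣ n → ∀ u : ℝ,
        0 ≤ Polynomial.aeval u (Polynomial.bernoulli n) - (bernoulli n : ℝ)) := by
  obtain ⟨k, hk2⟩ : ∃ k, n = 2 * k := heven.exists_two_nsmul n
  have hk0 : k ≠ 0 := by omega
  have hdiv : n / 2 = k := by omega
  constructor
  · intro u hu0 hu1
    have hneg := key_neg k hk0 hu0 hu1
    rw [hdiv, hk2, aeval_eq_bernoulliFun]
    rcases Nat.even_or_odd k with hke | hko
    · rw [hke.neg_one_pow, one_mul]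
      rw [(hke.add_one).neg_one_pow, neg_one_mul] at hneg
      linarith
    · rw [hko.neg_one_pow]
      rw [(hko.add_one).neg_one_pow, one_mul] at hneg
      linarith
  · intro h4 u
    have hke : Even k := by
      obtain ⟨m, hm⟩ := h4; exact ⟨m, by omega⟩
    have h01 : ∀ x : ℝ, x ∈ Set.Icc (0:ℝ) 1 →
        0 ≤ bernoulliFun n x - (bernoulli n : ℝ) := by
      intro x hx
      have hnp := key_nonpos k hk0 hx
      rw [(hke.add_one).neg_one_pow, neg_one_mul] at hnp
      rw [hk2]
      linarith
    have hodd : Odd (n - 1) := ⟨k - 1, by omega⟩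
    have hncast : (0:ℝ) ≤ (n : ℝ) := Nat.cast_nonneg n
    have up : ∀ m : ℕ, ∀ v : ℝ, 0 ≤ v → v ≤ (m : ℝ) + 1 →
        0 ≤ bernoulliFun n v - (bernoulli n : ℝ) := by
      intro m
      induction m with
      | zero =>
        intro v h0 h1
        exact h01 v ⟨h0, by simpa using h1⟩
      | succ m ih =>
        intro v h0 h1
        rcases le_or_gt v ((m : ℝ) + 1) with h | h
        · exact ih v h0 h
        · have hm0 : (0:ℝ) ≤ (m : ℝ) := Nat.cast_nonneg m
          have heq : v - 1 + 1 = v := by ring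
          have hB := bernoulliFun_add_one n (v - 1)
          rw [heq] at hB
          have hprev := ih (v - 1) (by linarith) (by push_cast at h1 ⊢; linarith)
          have hpow : (0:ℝ) ≤ (n : ℝ) * (v - 1) ^ (n - 1) :=
            mul_nonneg hncast (pow_nonneg (by linarith) _)
          linarith [hB, hprev, hpow]
    have down : ∀ m : ℕ, ∀ v : ℝ, -(m : ℝ) ≤ v → v ≤ 1 →
        0 ≤ bernoulliFun n v - (bernoulli n : ℝ) := by
      intro m
      induction m with
      | zero =>
        intro v h0 h1
        exact h01 v ⟨by simpa using h0, h1⟩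
      | succ m ih =>
        intro v h0 h1
        rcases le_or_gt (-(m : ℝ)) v with h | h
        · exact ih v h h1
        · have hm0 : (0:ℝ) ≤ (m : ℝ) := Nat.cast_nonneg m
          have hB := bernoulliFun_add_one n v
          have hnext := ih (v + 1) (by push_cast at h0 ⊢; linarith) (by linarith)
          have hpow : (n : ℝ) * v ^ (n - 1) ≤ 0 :=
            mul_nonpos_of_nonneg_of_nonpos hncast (hodd.pow_nonpos (by linarith))
          linarith [hB, hnext, hpow]
    rw [aeval_eq_bernoulliFun]
    rcases le_or_gt 0 u with hu | hu
    · obtain ⟨m, hm⟩ := exists_nat_ge u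
      exact up m u hu (by linarith)
    · obtain ⟨m, hm⟩ := exists_nat_ge (-u)
      exact down m u (by linarith) (by linarith)
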